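/- Effective supremum for totally bounded subsets of ℝ with net contained in the set: Let X ⊆ ℝ be nonempty, let x : ℕ → ℝ be a sequence with x n ∈ X for all n, and let g : ℕ → ℕ be such that for every k ≥ 1 and every y ∈ X there is n ≤ g k with |x n − y| < 1/k. Then X is bounded above and for every k ≥ 1, writing M_k := max over n ≤ g k of x n, one has sSup X − 1/k ≤ M_k ≤ sSup X. -/

import Mathlib

/-- Effective supremum for totally bounded `X ⊆ ℝ` whose net lies in `X`: `X` is
bounded above and, for `k ≥ 1`, the maximum `M_k` of `x n` over `n ≤ g k` satisfies
`sSup X − 1/k ≤ M_k ≤ sSup X`. -/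
theorem totallyBounded_effective_sSup (X : Set ℝ) (hX : X.Nonempty)
    (x : ℕ → ℝ) (hx : ∀ n, x n ∈ X) (g : ℕ → ℕ)
    (htb : ∀ k : ℕ, 1 ≤ k → ∀ y ∈ X, ∃ n ≤ g k, |x n - y| < 1 / (k : ℝ)) :
    BddAbove X ∧
    ∀ k : ℕ, 1 ≤ k →
      sSup X - 1 / (k : ℝ) ≤ (Finset.range (g k + 1)).sup' Finset.nonempty_range_add_one x ∧
      (Finset.range (g k + 1)).sup' Finset.nonempty_range_add_one x ≤ sSup X := by
  have key : ∀ k : ℕ, 1 ≤ k → ∀ y ∈ X,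
      y ≤ (Finset.range (g k + 1)).sup' Finset.nonempty_range_add_one x + 1 / (k : ℝ) := by
    intro k hk y hy
    obtain ⟨n, hn, habs⟩ := htb k hk y hy
    have h1 : y - x n < 1 / (k : ℝ) := by
      have := abs_lt.mp habs
      linarith [this.1]
    have h2 : x n ≤ (Finset.range (g k + 1)).sup' Finset.nonempty_range_add_one x :=
      Finset.le_sup' x (Finset.mem_range.mpr (Nat.lt_succ_of_le hn))
    linarith
  have hbdd : BddAbove X :=
    ⟨(Finset.range (g 1 + 1)).sup' Finset.nonempty_range_add_one x + 1 / (1 : ℝ),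
      fun y hy => by simpa using key 1 le_rfl y hy⟩
  refine ⟨hbdd, fun k hk => ?_⟩
  constructor
  · have hsup : sSup X ≤ (Finset.range (g k + 1)).sup' Finset.nonempty_range_add_one x + 1 / (k : ℝ) :=
      csSup_le hX (key k hk)
    linarith
  · apply Finset.sup'_le
    intro n _
    exact le_csSup hbdd (hx n)
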